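/- Under GCSOD with left-group optimal deadline D_L and right-group optimal deadline D_R with D_L < D_R: the left group faces deadline D_R > D_L and therefore its cost sharing succeeds (the set K(D_R) for the left group is nonempty), while the right group faces deadline D_L < D_R and its cost sharing fails (the set K(D_L) for the right group is empty). Hence exactly one group's members make payments totaling 1, so GCSOD is ex post budget balanced whenever D_L ≠ D_R. -/
import Mathlib

/-- Under GCSOD with D_L < D_R: the left group's cost sharing (facing deadline
D_R) succeeds, and the right group's cost sharing (facing deadline D_L) fails. -/
theorem gcsod_one_group_succeeds
    (KL KR : ℝ → Set ℕ) (DL DR : ℝ)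
    (hmonoL : ∀ s t : ℝ, s ≤ t → KL s ⊆ KL t)
    (hmonoR : ∀ s t : ℝ, s ≤ t → KR s ⊆ KR t)
    (hLopt : (KL DL).Nonempty ∧ ∀ t : ℝ, (KL t).Nonempty → DL ≤ t)
    (hRopt : ∀ t : ℝ, (KR t).Nonempty → DR ≤ t)
    (h : DL < DR) :
    (KL DR).Nonempty ∧ KR DL = ∅ := by
  constructor
  · exact hLopt.1.mono (hmonoL DL DR h.le)
  · by_contra hne
    exact absurd (hRopt DL (Set.nonempty_iff_ne_empty.2 hne)) (not_le.2 h)
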